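/- Let (A_1,...,A_d) be a commuting tuple of N×N complex matrices, and let S ⊆ ℂ^d be a finite set with |S| ≥ N(d−1)+1 such that every subset of S of cardinality d is linearly independent. If det(α_1 A_1 + ... + α_d A_d) = 0 for all (α_1,...,α_d) ∈ S, then (0,...,0) is a joint eigenvalue of (A_1,...,A_d). -/

import Mathlib

open Matrix Function Set

lemma aux_exists_ker_of_nilpotent {V : Type*} [AddCommGroup V] [Module ℂ V] [Nontrivial V]
    (f : Module.End ℂ V) (hf : IsNilpotent f) : ∃ v : V, v ≠ 0 ∧ f v = 0 := by
  obtain ⟨u, hu⟩ := exists_ne (0 : V)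
  obtain ⟨k, hk⟩ := hf
  have hex : ∃ m, (f ^ m) u = 0 := ⟨k, by rw [hk]; rfl⟩
  classical
  let m := Nat.find hex
  have hm : (f ^ m) u = 0 := Nat.find_spec hex
  have hm0 : m ≠ 0 := by
    intro h
    rw [h] at hm
    simp at hm
    exact hu hm
  have hlt : (f ^ (m - 1)) u ≠ 0 := Nat.find_min hex (by omega)
  refine ⟨(f ^ (m - 1)) u, hlt, ?_⟩
  have : f ((f ^ (m - 1)) u) = (f ^ m) u := by
    rw [← Module.End.mul_apply, ← pow_succ']
    congr 2
    omega
  rw [this, hm]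

lemma aux_common_ker : ∀ (d : ℕ) (V : Type) [AddCommGroup V] [Module ℂ V] [Nontrivial V]
    (f : Fin d → Module.End ℂ V),
    (∀ i j, Commute (f i) (f j)) → (∀ i, IsNilpotent (f i)) →
    ∃ v : V, v ≠ 0 ∧ ∀ j, f j v = 0 := by
  intro d
  induction d with
  | zero =>
    intro V _ _ _ f _ _
    obtain ⟨v, hv⟩ := exists_ne (0 : V)
    exact ⟨v, hv, fun j => j.elim0⟩
  | succ d ih =>
    intro V _ _ _ f hcomm hnil
    obtain ⟨v, hv, hv0⟩ := aux_exists_ker_of_nilpotent (f 0) (hnil 0)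
    set K := LinearMap.ker (f 0) with hK
    have hvK : v ∈ K := hv0
    have : Nontrivial K := ⟨⟨v, hvK⟩, 0, by simpa using hv⟩
    have hmaps : ∀ j, MapsTo (f j) K K := by
      intro j x hx
      simp only [K, SetLike.mem_coe, LinearMap.mem_ker] at hx ⊢
      rw [← Module.End.mul_apply, (hcomm 0 j).eq, Module.End.mul_apply, hx, map_zero]
    obtain ⟨w, hw, hw0⟩ := ih K (fun i => (f i.succ).restrict (hmaps i.succ))
      (fun i j => LinearMap.restrict_commute (hcomm i.succ j.succ) _ _)
      (fun i => Module.End.isNilpotent.restrict _ (hnil i.succ))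
    refine ⟨(w : V), by simpa using hw, ?_⟩
    intro j
    induction j using Fin.cases with
    | zero => exact w.2
    | succ i =>
      have := congr_arg Subtype.val (hw0 i)
      exact this

theorem stmt_2 (d N : ℕ)
    (A : Fin d → Matrix (Fin N) (Fin N) ℂ)
    (hcomm : ∀ i j, Commute (A i) (A j))
    (S : Finset (Fin d → ℂ))
    (hcard : N * (d - 1) + 1 ≤ S.card)
    (hind : ∀ T : Finset (Fin d → ℂ), T ⊆ S → T.card = d →
      LinearIndependent ℂ (fun x : T => (x : Fin d → ℂ)))
    (hdet : ∀ α ∈ S, (∑ j, α j • A j).det = 0) :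
    ∃ v : Fin N → ℂ, v ≠ 0 ∧ ∀ j, A j *ᵥ v = 0 := by
  classical
  rcases Nat.eq_zero_or_pos N with hN | hN
  · exfalso
    obtain ⟨α, hα⟩ := Finset.card_pos.mp (by omega : 0 < S.card)
    have h1 := hdet α hα
    have : IsEmpty (Fin N) := by rw [hN]; infer_instance
    rw [Matrix.det_isEmpty] at h1
    exact one_ne_zero h1
  set V := (Fin N → ℂ) with hV
  set f : Fin d → Module.End ℂ V := fun j => Matrix.mulVecLin (A j) with hf
  have hcommf : ∀ i j, Commute (f i) (f j) := by
    intro i j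
    show f i * f j = f j * f i
    simp only [hf, Module.End.mul_eq_comp, ← Matrix.mulVecLin_mul]
    rw [(hcomm i j).eq]
  have hmapsmax : ∀ i j φ,
      MapsTo (f i) ((f j).maxGenEigenspace φ) ((f j).maxGenEigenspace φ) :=
    fun i j φ => Module.End.mapsTo_maxGenEigenspace_of_comm (hcommf j i) φ
  set W : (Fin d → ℂ) → Submodule ℂ V := fun χ => ⨅ i, (f i).maxGenEigenspace (χ i) with hW
  have hmapsW : ∀ i χ, MapsTo (f i) (W χ) (W χ) := by
    intro i χ x hx
    simp only [hW, SetLike.mem_coe, Submodule.mem_iInf] at hx ⊢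
    exact fun j => (Module.End.mapsTo_maxGenEigenspace_of_comm (hcommf j i) (χ j)) (hx j)
  have hindep : iSupIndep W :=
    Module.End.independent_iInf_maxGenEigenspace_of_forall_mapsTo f hmapsmax
  haveI : Fintype {χ // W χ ≠ ⊥} := hindep.fintypeNeBotOfFiniteDimensional
  have hcardsupp : Fintype.card {χ // W χ ≠ ⊥} ≤ N := by
    have h2 := hindep.subtype_ne_bot_le_finrank
    have h3 : Module.finrank ℂ V = N := Module.finrank_fin_fun ℂ
    omega
  set supp : Finset (Fin d → ℂ) :=
    Finset.univ.image (fun x : {χ // W χ ≠ ⊥} => (x : Fin d → ℂ)) with hsupp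
  have hsuppmem : ∀ χ, χ ∈ supp ↔ W χ ≠ ⊥ := by
    intro χ
    simp only [hsupp, Finset.mem_image, Finset.mem_univ, true_and]
    constructor
    · rintro ⟨⟨x, hx⟩, rfl⟩; exact hx
    · intro h; exact ⟨⟨χ, h⟩, rfl⟩
  have hsuppcard : supp.card ≤ N := by
    refine le_trans ?_ hcardsupp
    simpa using Finset.card_image_le (s := (Finset.univ : Finset {χ // W χ ≠ ⊥}))
      (f := fun x => (x : Fin d → ℂ))
  -- Key step: every α ∈ S is orthogonal to some χ in the support
  have hA : ∀ α ∈ S, ∃ χ, W χ ≠ ⊥ ∧ ∑ j, α j * χ j = 0 := by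
    intro α hα
    obtain ⟨v, hv, hv0⟩ := (Matrix.exists_mulVec_eq_zero_iff).mpr (hdet α hα)
    set g : Module.End ℂ V := ∑ j, α j • f j with hg
    have hgv : g v = 0 := by
      have h1 : g v = ∑ j, α j • (A j *ᵥ v) := by
        show (∑ j, α j • f j) v = _
        rw [LinearMap.sum_apply]
        refine Finset.sum_congr rfl fun j _ => ?_
        rw [LinearMap.smul_apply]
        rfl
      rw [h1]
      calc ∑ j, α j • (A j *ᵥ v) = ∑ j, (α j • A j) *ᵥ v := by
            simp [Matrix.smul_mulVec]
        _ = (∑ j, α j • A j) *ᵥ v :=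
            (map_sum (Matrix.mulVec.addMonoidHomLeft v) _ _).symm
        _ = 0 := hv0
    have hcommg : ∀ i, Commute (f i) g :=
      fun i => Commute.sum_right _ _ _ fun j _ => Commute.smul_right (hcommf i j) (α j)
    set K := LinearMap.ker g with hKdef
    haveI hKnt : Nontrivial K := ⟨⟨v, hgv⟩, 0, fun h => hv (congr_arg Subtype.val h)⟩
    have hmapsK : ∀ i, MapsTo (f i) K K := by
      intro i x hx
      simp only [hKdef, SetLike.mem_coe, LinearMap.mem_ker] at hx ⊢
      rw [← Module.End.mul_apply, ← (hcommg i).eq, Module.End.mul_apply, hx, map_zero]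
    have htop : ⨆ χ : Fin d → ℂ, ⨅ i,
        Module.End.maxGenEigenspace ((f i).restrict (hmapsK i)) (χ i) = ⊤ :=
      Module.End.iSup_iInf_maxGenEigenspace_eq_top_of_iSup_maxGenEigenspace_eq_top_of_commute _
        (fun i j _ => LinearMap.restrict_commute (hcommf i j) _ _)
        (fun i => Module.End.iSup_maxGenEigenspace_eq_top _)
    have hex : ∃ χ : Fin d → ℂ,
        (⨅ i, Module.End.maxGenEigenspace ((f i).restrict (hmapsK i)) (χ i)) ≠ ⊥ := by
      by_contra h
      push_neg at h
      obtain ⟨u, hu⟩ := exists_ne (0 : K)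
      have hu' : u ∈ (⊤ : Submodule ℂ K) := Submodule.mem_top
      rw [← htop] at hu'
      have : (⨆ χ : Fin d → ℂ, ⨅ i,
          Module.End.maxGenEigenspace ((f i).restrict (hmapsK i)) (χ i)) = ⊥ := by
        simp [h]
      rw [this] at hu'
      exact hu (by simpa using hu')
    obtain ⟨χ, hχ⟩ := hex
    have hinf := Submodule.inf_iInf_maxGenEigenspace_of_forall_mapsTo f (μ := χ) K hmapsK
    have hKW : K ⊓ W χ ≠ ⊥ := by
      rw [hW]
      rw [hinf]
      intro hbot
      apply hχ
      rw [← le_bot_iff]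
      intro x hx
      have : (K.subtype x) ∈ (⨅ i, Module.End.maxGenEigenspace
          ((f i).restrict (hmapsK i)) (χ i)).map K.subtype := Submodule.mem_map_of_mem hx
      rw [hbot] at this
      simpa using this
    have hWne : W χ ≠ ⊥ := by
      intro h
      apply hKW
      rw [h]
      simp
    obtain ⟨w, hwmem, hwne⟩ := (Submodule.ne_bot_iff _).mp hKW
    refine ⟨χ, hWne, ?_⟩
    set c := ∑ j, α j * χ j with hc
    set p := W χ with hp
    have hwp : w ∈ p := hwmem.2
    have hgw : g w = 0 := hwmem.1
    set m : Fin d → Module.End ℂ V :=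
      fun i => f i - algebraMap ℂ (Module.End ℂ V) (χ i) with hm
    have hmapsm : ∀ i, MapsTo (m i) p p := by
      intro i x hx
      have h1 : f i x ∈ p := hmapsW i χ hx
      have h2 : m i x = f i x - χ i • x := by
        simp [hm, Module.algebraMap_end_apply]
      simp only [SetLike.mem_coe] at h1 hx ⊢
      rw [h2]
      exact p.sub_mem h1 (p.smul_mem _ hx)
    have hcommm : ∀ i j, Commute (m i) (m j) := by
      intro i j
      exact ((hcommf i j).sub_left (Algebra.commute_algebraMap_left _ _)).sub_right
        ((Algebra.commute_algebraMap_right _ _).sub_left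
          (Algebra.commute_algebraMap_left _ _))
    have hnilm : ∀ i, IsNilpotent ((m i).restrict (hmapsm i)) := by
      intro i
      have hle : p ≤ (f i).maxGenEigenspace (χ i) := iInf_le _ i
      exact Module.End.isNilpotent_restrict_of_le hle
        (Module.End.isNilpotent_restrict_maxGenEigenspace_sub_algebraMap (f i) (χ i))
    set n : Module.End ℂ p := ∑ i, α i • ((m i).restrict (hmapsm i)) with hn
    have hnnil : IsNilpotent n := by
      refine Commute.isNilpotent_sum (fun i _ => (hnilm i).smul (α i)) ?_
      intro i j _ _
      exact Commute.smul_left (Commute.smul_right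
        (LinearMap.restrict_commute (hcommm i j) _ _) _) _
    set w' : p := ⟨w, hwp⟩ with hw'
    have hw'ne : w' ≠ 0 := by
      intro h
      apply hwne
      simpa [hw'] using congr_arg Subtype.val h
    have hnw : n w' = (-c) • w' := by
      have hcoe : ((n w' : p) : V) = ∑ i, α i • (m i w) := by
        rw [hn, LinearMap.sum_apply, AddSubmonoidClass.coe_finset_sum]
        refine Finset.sum_congr rfl fun i _ => ?_
        rw [LinearMap.smul_apply, SetLike.val_smul]
        rfl
      have hsum : ∑ i, α i • (m i w) = -(c • w) := by
        have h1 : ∀ i, α i • (m i w) = α i • (f i w) - (α i * χ i) • w := fun i => by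
          simp [hm, Module.algebraMap_end_apply, smul_sub, smul_smul]
        rw [Finset.sum_congr rfl fun i _ => h1 i, Finset.sum_sub_distrib, ← Finset.sum_smul]
        have hgw' : (∑ i, α i • (f i w)) = 0 := by
          have h2 : g w = ∑ i, α i • (f i w) := by
            show (∑ j, α j • f j) w = _
            rw [LinearMap.sum_apply]
            exact Finset.sum_congr rfl fun i _ => by rw [LinearMap.smul_apply]
          rw [← h2, hgw]
        rw [hgw', ← hc, zero_sub]
      apply Subtype.ext
      rw [hcoe, hsum]
      simp [neg_smul, hw']
    have hiter : ∀ k : ℕ, (n ^ k) w' = ((-c) ^ k) • w' := by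
      intro k
      induction k with
      | zero => simp
      | succ k ihk =>
        rw [pow_succ', Module.End.mul_apply, ihk, _root_.map_smul, hnw, smul_smul, ← pow_succ]
    obtain ⟨k, hk⟩ := hnnil
    have hzero : ((-c) ^ k) • w' = 0 := by
      rw [← hiter, hk]
      rfl
    have hck : (-c) ^ k = 0 := by
      rcases smul_eq_zero.mp hzero with h | h
      · exact h
      · exact absurd h hw'ne
    have hk0 : k ≠ 0 := by
      intro h
      rw [h] at hck
      simpa using hck
    exact neg_eq_zero.mp (pow_eq_zero_iff hk0 |>.mp hck)
  -- pigeonhole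
  choose F hF1 hF2 using hA
  set G : (Fin d → ℂ) → (Fin d → ℂ) := fun α => if h : α ∈ S then F α h else 0 with hG
  have hmapsto : ∀ α ∈ S, G α ∈ supp := by
    intro α hα
    rw [hsuppmem, hG]
    simp only [dif_pos hα]
    exact hF1 α hα
  have hlt : supp.card * (d - 1) < S.card :=
    lt_of_le_of_lt (Nat.mul_le_mul_right _ hsuppcard) (by omega)
  obtain ⟨χ, hχsupp, hχcard⟩ := Finset.exists_lt_card_fiber_of_mul_lt_card_of_maps_to hmapsto hlt
  obtain ⟨T, hTsub, hTcard⟩ := Finset.exists_subset_card_eq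
    (show d ≤ (S.filter fun x => G x = χ).card by omega)
  have hTS : T ⊆ S := hTsub.trans (Finset.filter_subset _ _)
  have hTzero : ∀ β ∈ T, ∑ j, β j * χ j = 0 := by
    intro β hβT
    have hβS : β ∈ S := hTS hβT
    have hGβ : G β = χ := (Finset.mem_filter.mp (hTsub hβT)).2
    have hFβ : F β hβS = χ := by rw [← hGβ, hG]; simp [dif_pos hβS]
    rw [← hFβ]
    exact hF2 β hβS
  have hχ0 : χ = (0 : Fin d → ℂ) := by
    rcases Nat.eq_zero_or_pos d with hd | hd
    · funext j
      exact absurd j.isLt (by omega)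
    · have hli := hind T hTS hTcard
      haveI : Nonempty T := by
        obtain ⟨x, hx⟩ := Finset.card_pos.mp (by omega : 0 < T.card)
        exact ⟨⟨x, hx⟩⟩
      have hcardT : Fintype.card T = Module.finrank ℂ (Fin d → ℂ) := by
        rw [Fintype.card_coe, hTcard, Module.finrank_fin_fun]
      have hspan := hli.span_eq_top_of_card_eq_finrank hcardT
      let L : (Fin d → ℂ) →ₗ[ℂ] ℂ :=
        { toFun := fun β => ∑ j, β j * χ j
          map_add' := fun x y => by simp [add_mul, Finset.sum_add_distrib]
          map_smul' := fun r x => by simp [Finset.mul_sum, mul_assoc] }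
      have hL : ∀ β : Fin d → ℂ, L β = 0 := by
        intro β
        have hβ : β ∈ Submodule.span ℂ (Set.range fun x : T => (x : Fin d → ℂ)) := by
          rw [hspan]; exact Submodule.mem_top
        induction hβ using Submodule.span_induction with
        | mem x hx =>
          obtain ⟨⟨a, haT⟩, rfl⟩ := hx
          exact hTzero a haT
        | zero => simp [L]
        | add x y _ _ hx hy => rw [map_add, hx, hy, add_zero]
        | smul r x _ hx => rw [LinearMap.map_smul, hx, smul_zero]
      funext j
      have hLj := hL (Pi.single j 1)
      simpa [L, Pi.single_apply] using hLj
  have hW0 : W 0 ≠ ⊥ := by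
    have h4 := (hsuppmem χ).mp hχsupp
    rwa [hχ0] at h4
  haveI hnt : Nontrivial (W (0 : Fin d → ℂ)) := Submodule.nontrivial_iff_ne_bot.mpr hW0
  set p0 := W (0 : Fin d → ℂ) with hp0
  have hmapsm0 : ∀ i, MapsTo (f i - algebraMap ℂ (Module.End ℂ V) 0) p0 p0 := by
    intro i x hx
    have h1 : f i x ∈ p0 := hmapsW i 0 hx
    have h2 : (f i - algebraMap ℂ (Module.End ℂ V) 0) x = f i x := by
      simp [Module.algebraMap_end_apply]
    simp only [SetLike.mem_coe] at h1 ⊢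
    rw [h2]; exact h1
  have hnil0 : ∀ i, IsNilpotent ((f i - algebraMap ℂ (Module.End ℂ V) 0).restrict (hmapsm0 i)) := by
    intro i
    have hle : p0 ≤ (f i).maxGenEigenspace 0 := iInf_le _ i
    exact Module.End.isNilpotent_restrict_of_le hle
      (Module.End.isNilpotent_restrict_maxGenEigenspace_sub_algebraMap (f i) 0)
  have hcomm0 : ∀ i j, Commute ((f i - algebraMap ℂ (Module.End ℂ V) 0).restrict (hmapsm0 i))
      ((f j - algebraMap ℂ (Module.End ℂ V) 0).restrict (hmapsm0 j)) := by
    intro i j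
    refine LinearMap.restrict_commute ?_ _ _
    exact ((hcommf i j).sub_left (Algebra.commute_algebraMap_left _ _)).sub_right
      ((Algebra.commute_algebraMap_right _ _).sub_left (Algebra.commute_algebraMap_left _ _))
  obtain ⟨w, hwne, hwker⟩ := aux_common_ker d p0
    (fun i => (f i - algebraMap ℂ (Module.End ℂ V) 0).restrict (hmapsm0 i)) hcomm0 hnil0
  refine ⟨(w : V), ?_, ?_⟩
  · intro h
    exact hwne (Subtype.ext h)
  · intro j
    have h5 := congr_arg Subtype.val (hwker j)
    change (f j - algebraMap ℂ (Module.End ℂ V) 0) (w : V) = 0 at h5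
    have h2 : (f j - algebraMap ℂ (Module.End ℂ V) 0) (w : V) = f j (w : V) := by
      simp [Module.algebraMap_end_apply]
    rw [h2] at h5
    exact h5
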